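/- Let (W,S) be a Coxeter system with a fixed total order on S, M a ℤ-module, and λ : A_Γ → Aut(M) a representation of the associated Artin group. Define C^k = ⊕_T M·e_T, the sum over subsets T ⊆ S with |T| = k and W_T finite, and define δ : C^k → C^{k+1} by δ(a·e_T) = Σ_{s ∈ S∖T, W_{T∪{s}} finite} (−1)^{σ(s,T)+1} Σ_w (−1)^{ℓ(w)} λ(ψ(w))(a)·e_{T∪{s}}, where w ranges over the minimal-length representatives of the cosets in W_{T∪{s}}/W_T and σ(s,T) is the number of elements of T strictly smaller than s. Then δ ∘ δ = 0, i.e. (C^*, δ) is a cochain complex. -/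

import Mathlib

/-!
STATEMENT 5: The Salvetti complex (C^*, δ) of a Coxeter system (W,S) with coefficients
in a representation λ : A_Γ → Aut(M) is a cochain complex: δ ∘ δ = 0.
-/

/-- The alternating word `s t s t ⋯` with `m` factors, as an element of the free group. -/
def braidWord {B : Type*} (s t : B) (m : ℕ) : FreeGroup B :=
  ((List.range m).map (fun i => if i % 2 = 0 then FreeGroup.of s else FreeGroup.of t)).prod

/-- The Artin relations associated to a Coxeter matrix `M`. -/
def artinRels {B : Type*} (M : CoxeterMatrix B) : Set (FreeGroup B) :=
  {r | ∃ s t : B, s ≠ t ∧ M s t ≠ 0 ∧ r = braidWord s t (M s t) * (braidWord t s (M s t))⁻¹}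

/-- The Artin group associated to a Coxeter matrix `M`. -/
def ArtinGroup {B : Type*} (M : CoxeterMatrix B) : Type _ := PresentedGroup (artinRels M)

instance {B : Type*} (M : CoxeterMatrix B) : Group (ArtinGroup M) :=
  QuotientGroup.Quotient.group _

/-- The standard generator `g_s` of the Artin group. -/
def artinGen {B : Type*} (M : CoxeterMatrix B) (s : B) : ArtinGroup M :=
  PresentedGroup.of s

/-- `ψ : W → A_Γ` is Matsumoto's section. -/
def IsMatsumotoSection {B : Type*} {W : Type*} [Group W] {M : CoxeterMatrix B}
    (cs : CoxeterSystem M W) (ψ : W → ArtinGroup M) : Prop :=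
  ∀ (w : W) (ω : List B), cs.IsReduced ω → cs.wordProd ω = w →
    ψ w = (ω.map (artinGen M)).prod

/-- The indexing set of the Salvetti complex: subsets `T ⊆ S` such that the standard
parabolic subgroup `W_T` is finite. -/
def SalIndex {B W : Type*} [Group W] {M : CoxeterMatrix B} (cs : CoxeterSystem M W) :
    Type _ :=
  {T : Finset B // (↑(Subgroup.closure (cs.simple '' (T : Set B))) : Set W).Finite}

/-- The total module of the Salvetti complex `C^* = ⊕_T M·e_T`; an element is recorded
by its coordinates: `c T` is the coefficient of the generator `e_T`.  The grading is
given by the cardinality of `T`. -/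
def SalC {B W : Type*} [Group W] {M : CoxeterMatrix B} (cs : CoxeterSystem M W)
    (Mod : Type*) : Type _ := SalIndex cs → Mod

instance {B W : Type*} [Group W] {M : CoxeterMatrix B} (cs : CoxeterSystem M W)
    (Mod : Type*) [AddCommGroup Mod] : AddCommGroup (SalC cs Mod) := Pi.addCommGroup

lemma salIndex_erase {B W : Type*} [Group W] {M : CoxeterMatrix B}
    (cs : CoxeterSystem M W) (U : SalIndex cs) (s : B) [DecidableEq B] :
    (↑(Subgroup.closure (cs.simple '' ((U.1.erase s : Finset B) : Set B))) : Set W).Finite :=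
  U.2.subset (SetLike.coe_subset_coe.mpr (Subgroup.closure_mono
    (Set.image_mono (Finset.coe_subset.mpr (Finset.erase_subset s U.1)))))

/-- The set of minimal-length representatives of the cosets in `W_{T∪{s}}/W_T`. -/
def minCosetReps {B W : Type*} [Group W] {M : CoxeterMatrix B} (cs : CoxeterSystem M W)
    (T : Finset B) (s : B) : Set W :=
  {w : W | w ∈ Subgroup.closure (cs.simple '' (insert s (T : Set B))) ∧
    ∀ v ∈ Subgroup.closure (cs.simple '' (T : Set B)),
      cs.length w ≤ cs.length (w * v)}

/-- The Salvetti coboundary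
`δ(a·e_T) = Σ_{s ∉ T, |W_{T∪{s}}| < ∞} (−1)^{σ(s,T)+1} Σ_w (−1)^{ℓ(w)} λ(ψ(w))(a)·e_{T∪{s}}`,
written in coordinates: the coefficient of `δc` at `U` collects, for each `s ∈ U`, the
contribution of the coefficient of `c` at `T = U ∖ {s}`.  Here `σ(s,T)` is the number of
elements of `T` strictly smaller than `s`, and `w` ranges over the minimal-length
representatives of the cosets in `W_U/W_T`. -/
noncomputable def salD {B W : Type*} [LinearOrder B] [Group W] {M : CoxeterMatrix B}
    (cs : CoxeterSystem M W) (ψ : W → ArtinGroup M)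
    {Mod : Type*} [AddCommGroup Mod] (lam : ArtinGroup M →* Multiplicative (AddAut Mod)) :
    SalC cs Mod → SalC cs Mod := fun c U =>
  ∑ s ∈ U.1, (-1 : ℤ) ^ ((((U.1.erase s).filter (fun t => t < s)).card) + 1) •
    ∑ᶠ w ∈ minCosetReps cs (U.1.erase s) s,
      (-1 : ℤ) ^ (cs.length w) • (Multiplicative.toAdd (lam (ψ w))) (c ⟨U.1.erase s, salIndex_erase cs U s⟩)



namespace Salvetti
open CoxeterSystem List

open scoped Classical

variable {B W : Type*} [Group W] {M : CoxeterMatrix B} (cs : CoxeterSystem M W)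

lemma simple_conj_eq_iff (i : B) (t : W) :
    cs.simple i * t * cs.simple i = cs.simple i ↔ t = cs.simple i := by
  constructor
  · intro hc
    have := congrArg (fun x => cs.simple i * x * cs.simple i) hc
    simpa [mul_assoc, cs.simple_mul_simple_cancel_left,
      cs.simple_mul_simple_cancel_right] using this
  · rintro rfl
    simp [cs.simple_mul_simple_self]

noncomputable def etaFun (i : B) : W × ℤˣ → W × ℤˣ := fun p =>
  (cs.simple i * p.1 * cs.simple i, if p.1 = cs.simple i then -p.2 else p.2)

lemma etaFun_involutive (i : B) : Function.Involutive (etaFun cs i) := by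
  intro p
  unfold etaFun
  have key : cs.simple i * (cs.simple i * p.1 * cs.simple i) * cs.simple i = p.1 := by
    rw [← mul_assoc, ← mul_assoc, cs.simple_mul_simple_self, one_mul,
      cs.simple_mul_simple_cancel_right]
  by_cases h : p.1 = cs.simple i
  · rw [if_pos h]
    have h2 : cs.simple i * p.1 * cs.simple i = cs.simple i :=
      (simple_conj_eq_iff cs i p.1).mpr h
    rw [if_pos h2]
    ext
    · exact key
    · simp
  · rw [if_neg h]
    have h2 : ¬ (cs.simple i * p.1 * cs.simple i = cs.simple i) := by
      rw [simple_conj_eq_iff]; exact h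
    rw [if_neg h2]
    ext
    · exact key
    · rfl

/-- The permutation of `W × ℤˣ` attached to a simple generator. -/
noncomputable def eta (i : B) : Equiv.Perm (W × ℤˣ) :=
  (etaFun_involutive cs i).toPerm

lemma eta_apply (i : B) (p : W × ℤˣ) :
    eta cs i p = (cs.simple i * p.1 * cs.simple i,
      if p.1 = cs.simple i then -p.2 else p.2) := rfl

end Salvetti

namespace Salvetti
open CoxeterSystem List
open scoped Classical

variable {B W : Type*} [Group W] {M : CoxeterMatrix B} (cs : CoxeterSystem M W)

lemma prod_map_eta (l : List B) (t : W) (ε : ℤˣ) :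
    ((l.map (eta cs)).prod) (t, ε) =
      (cs.wordProd l * t * (cs.wordProd l)⁻¹,
        (-1) ^ ((cs.rightInvSeq l).count t) * ε) := by
  induction l with
  | nil => simp [cs.wordProd_nil]
  | cons i l ih =>
    have hris : cs.rightInvSeq (i :: l)
        = ((cs.wordProd l)⁻¹ * cs.simple i * cs.wordProd l) :: cs.rightInvSeq l := rfl
    rw [List.map_cons, List.prod_cons, Equiv.Perm.mul_apply, ih, eta_apply]
    have hcond : (cs.wordProd l * t * (cs.wordProd l)⁻¹ = cs.simple i)
        ↔ (t = (cs.wordProd l)⁻¹ * cs.simple i * cs.wordProd l) := by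
      constructor
      · intro h; rw [← h]; group
      · intro h; rw [h]; group
    rw [hris, cs.wordProd_cons]
    have hcount : ((((cs.wordProd l)⁻¹ * cs.simple i * cs.wordProd l) :: cs.rightInvSeq l).count t)
        = (cs.rightInvSeq l).count t
          + if t = (cs.wordProd l)⁻¹ * cs.simple i * cs.wordProd l then 1 else 0 := by
      rw [List.count_cons]
      congr 1
      simp only [beq_iff_eq]
      by_cases h : t = (cs.wordProd l)⁻¹ * cs.simple i * cs.wordProd l
      · rw [if_pos h, if_pos h.symm]
      · rw [if_neg h, if_neg (fun hc => h hc.symm)]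
    rw [hcount]
    have hfst : cs.simple i * (cs.wordProd l * t * (cs.wordProd l)⁻¹) * cs.simple i
        = cs.simple i * cs.wordProd l * t * (cs.simple i * cs.wordProd l)⁻¹ := by
      rw [mul_inv_rev, cs.inv_simple, ← mul_assoc, ← mul_assoc, ← mul_assoc]
    by_cases h : t = (cs.wordProd l)⁻¹ * cs.simple i * cs.wordProd l
    · rw [if_pos h, if_pos (hcond.mpr h)]
      refine Prod.ext hfst ?_
      show (-((-1:ℤˣ) ^ (cs.rightInvSeq l).count t * ε))
          = (-1:ℤˣ) ^ ((cs.rightInvSeq l).count t + 1) * ε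
      rw [pow_succ, mul_neg_one, neg_mul]
    · rw [if_neg h, if_neg (fun hc => h (hcond.mp hc))]
      refine Prod.ext hfst ?_
      show ((-1:ℤˣ) ^ (cs.rightInvSeq l).count t * ε) = _
      rw [add_zero]

end Salvetti

namespace Salvetti
open CoxeterSystem List
open scoped Classical

variable {B W : Type*} [Group W] {M : CoxeterMatrix B} (cs : CoxeterSystem M W)

lemma prod_map_alt {G : Type*} [Monoid G] (f : B → G) (i i' : B) (m : ℕ) :
    ((CoxeterSystem.alternatingWord i i' (2*m)).map f).prod = (f i * f i') ^ m := by
  induction m with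
  | zero => simp [CoxeterSystem.alternatingWord]
  | succ m ih =>
    have h2 : 2 * (m+1) = (2*m + 1) + 1 := by ring
    rw [h2, CoxeterSystem.alternatingWord_succ', CoxeterSystem.alternatingWord_succ']
    have he : ¬ Even (2*m+1) := by simp [Nat.even_add_one, parity_simps]
    have he2 : Even (2*m) := even_two_mul m
    rw [if_neg he, if_pos he2]
    rw [List.map_cons, List.map_cons, List.prod_cons, List.prod_cons, ih, pow_succ']
    rw [← mul_assoc]

lemma alt_drop (i i' : B) : ∀ (d n : ℕ),
    (CoxeterSystem.alternatingWord i i' n).drop d = CoxeterSystem.alternatingWord i i' (n - d) := by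
  intro d
  induction d with
  | zero => simp
  | succ d ih =>
    intro n
    cases n with
    | zero => simp [CoxeterSystem.alternatingWord]
    | succ n =>
      rw [CoxeterSystem.alternatingWord_succ', List.drop_succ_cons, ih n]
      congr 1
      omega

lemma alt_wordProd_even (i i' : B) (j : ℕ) :
    cs.wordProd (CoxeterSystem.alternatingWord i i' (2*j)) = (cs.simple i * cs.simple i') ^ j :=
  prod_map_alt cs.simple i i' j

lemma alt_wordProd_odd (i i' : B) (j : ℕ) :
    cs.wordProd (CoxeterSystem.alternatingWord i i' (2*j+1))
      = cs.simple i' * (cs.simple i * cs.simple i') ^ j := by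
  rw [CoxeterSystem.alternatingWord_succ', if_pos (even_two_mul j), cs.wordProd_cons,
    alt_wordProd_even]

lemma conj_pow_simple (i i' : B) (j : ℕ) :
    cs.simple i' * (cs.simple i * cs.simple i') ^ j * cs.simple i'
      = (cs.simple i' * cs.simple i) ^ j := by
  have := conj_pow (i := j) (a := cs.simple i') (b := cs.simple i * cs.simple i')
  rw [cs.inv_simple] at this
  rw [← this]
  congr 1
  rw [← mul_assoc]
  exact cs.simple_mul_simple_cancel_right i'

lemma pow_cancel_simple (i i' : B) (j : ℕ) :
    (cs.simple i' * cs.simple i) ^ j * (cs.simple i * cs.simple i') ^ j = 1 := by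
  have : ((cs.simple i * cs.simple i') ^ j)⁻¹ = (cs.simple i' * cs.simple i) ^ j := by
    rw [← inv_pow, mul_inv_rev, cs.inv_simple, cs.inv_simple]
  rw [← this, inv_mul_cancel]

/-- The key conjugation lemma for alternating words. -/
lemma alt_conj (i i' : B) (k : ℕ) :
    cs.wordProd (CoxeterSystem.alternatingWord i i' k)
        * (cs.simple i' * (cs.simple i * cs.simple i') ^ k)
      = cs.simple (if Even k then i' else i)
        * cs.wordProd (CoxeterSystem.alternatingWord i i' k) := by
  rcases Nat.even_or_odd k with he | ho
  · obtain ⟨j', hj'⟩ := he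
    obtain ⟨j, rfl⟩ : ∃ j, k = 2*j := ⟨j', by omega⟩
    rw [if_pos (even_two_mul j), alt_wordProd_even]
    set p := cs.simple i * cs.simple i'
    set a := cs.simple i'
    -- goal : p^j * (a * p^(2j)) = a * p^j
    have key : p ^ j * a * p ^ j = a := by
      have h1 : a * (p ^ j * a * p ^ j) = a * a := by
        rw [← mul_assoc, ← mul_assoc, mul_assoc (a * p ^ j) a (p^j)]
        rw [show a * p ^ j * (a * p ^ j) = (a * p^j * a) * p ^ j by group]
        rw [conj_pow_simple cs i i', pow_cancel_simple cs i i']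
        rw [show a * a = cs.simple i' * cs.simple i' from rfl, cs.simple_mul_simple_self]
      exact mul_left_cancel h1
    calc p ^ j * (a * p ^ (2*j)) = (p ^ j * a * p ^ j) * p ^ j := by
          rw [two_mul, pow_add]; group
      _ = a * p ^ j := by rw [key]
  · obtain ⟨j, rfl⟩ := ho
    have hne : ¬ Even (2*j+1) := by simp [Nat.even_add_one, parity_simps]
    rw [if_neg hne, alt_wordProd_odd]
    set p := cs.simple i * cs.simple i'
    set a := cs.simple i'
    -- goal : (a * p^j) * (a * p^(2j+1)) = s i * (a * p^j)
    have h1 : a * p ^ j * a = (cs.simple i' * cs.simple i) ^ j := conj_pow_simple cs i i' j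
    calc a * p ^ j * (a * p ^ (2*j+1))
        = (a * p ^ j * a) * p ^ (2*j+1) := by rw [← mul_assoc]
      _ = (cs.simple i' * cs.simple i) ^ j * (p ^ j * p ^ (j+1)) := by
          rw [h1, show 2*j+1 = j + (j+1) by ring, pow_add]
      _ = p ^ (j+1) := by
          rw [← mul_assoc, pow_cancel_simple cs i i', one_mul]
      _ = cs.simple i * (a * p ^ j) := by
          rw [pow_succ']
          show p * p ^ j = cs.simple i * (cs.simple i' * p ^ j)
          rw [← mul_assoc]

end Salvetti

namespace Salvetti
open CoxeterSystem List
open scoped Classical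

variable {B W : Type*} [Group W] {M : CoxeterMatrix B} (cs : CoxeterSystem M W)

lemma alt_get? (i i' : B) {n j : ℕ} (h : j < n) :
    (CoxeterSystem.alternatingWord i i' n)[j]?
      = some (if Even (n - j - 1) then i' else i) := by
  have hd : (CoxeterSystem.alternatingWord i i' n).drop j
      = CoxeterSystem.alternatingWord i i' (n - j) := alt_drop i i' j n
  have hnj : n - j = (n - j - 1) + 1 := by omega
  have : (CoxeterSystem.alternatingWord i i' n)[j]?
      = ((CoxeterSystem.alternatingWord i i' n).drop j)[0]? := by
    rw [List.getElem?_drop, Nat.add_zero]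
  rw [this, hd, hnj, CoxeterSystem.alternatingWord_succ']
  rfl

lemma ris_alt_getD (i i' : B) {n j : ℕ} (h : j < n) :
    (cs.rightInvSeq (CoxeterSystem.alternatingWord i i' n)).getD j 1
      = cs.simple i' * (cs.simple i * cs.simple i') ^ (n - j - 1) := by
  rw [cs.getD_rightInvSeq, alt_get? i i' h]
  have hd : (CoxeterSystem.alternatingWord i i' n).drop (j+1)
      = CoxeterSystem.alternatingWord i i' (n - j - 1) := by
    rw [alt_drop i i' (j+1) n]
    congr 1
  rw [hd]
  set q := n - j - 1 with hq
  have hmid : (Option.map cs.simple (some (if Even q then i' else i))).getD 1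
      = cs.simple (if Even q then i' else i) := rfl
  rw [hmid]
  have h2 := alt_conj cs i i' q
  rw [mul_assoc, ← h2, ← mul_assoc, inv_mul_cancel, one_mul]

lemma ris_alt_pairing (i i' : B) :
    cs.rightInvSeq (CoxeterSystem.alternatingWord i i' (2 * M i i'))
      = (cs.rightInvSeq (CoxeterSystem.alternatingWord i i' (2 * M i i'))).take (M i i')
        ++ (cs.rightInvSeq (CoxeterSystem.alternatingWord i i' (2 * M i i'))).take (M i i') := by
  set m := M i i' with hm
  set L := cs.rightInvSeq (CoxeterSystem.alternatingWord i i' (2 * m)) with hL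
  have hlen : L.length = 2 * m := by
    rw [hL, cs.length_rightInvSeq, CoxeterSystem.length_alternatingWord]
  have hdt : L.drop m = L.take m := by
    apply List.ext_getElem
    · simp only [List.length_drop, List.length_take, hlen, Nat.min_def]
      split <;> omega
    · intro j h1 h2
      rw [List.getElem_drop, List.getElem_take]
      have hj : j < m := by simp [hlen] at h2; omega
      have e1 : L[m + j] = L.getD (m+j) 1 := by
        rw [List.getD_eq_getElem]
      have e2 : L[j] = L.getD j 1 := by
        rw [List.getD_eq_getElem]
      rw [e1, e2, hL, ris_alt_getD cs i i' (by omega), ris_alt_getD cs i i' (by omega)]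
      congr 1
      rw [show 2 * m - j - 1 = m + (2 * m - (m + j) - 1) by omega, pow_add, hm,
        cs.simple_mul_simple_pow, one_mul]
  conv_lhs => rw [← List.take_append_drop m L, hdt]

end Salvetti

namespace Salvetti
open CoxeterSystem List
open scoped Classical

variable {B W : Type*} [Group W] {M : CoxeterMatrix B} (cs : CoxeterSystem M W)

lemma eta_liftable : M.IsLiftable (eta cs) := by
  intro i i'
  have hp : ((CoxeterSystem.alternatingWord i i' (2 * M i i')).map (eta cs)).prod
      = (eta cs i * eta cs i') ^ (M i i') := prod_map_alt (eta cs) i i' (M i i')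
  rw [← hp]
  apply Equiv.ext
  rintro ⟨t, ε⟩
  rw [prod_map_eta]
  have hπ : cs.wordProd (CoxeterSystem.alternatingWord i i' (2 * M i i')) = 1 := by
    rw [alt_wordProd_even, cs.simple_mul_simple_pow]
  have hcount : Even ((cs.rightInvSeq
      (CoxeterSystem.alternatingWord i i' (2 * M i i'))).count t) := by
    rw [ris_alt_pairing cs i i', List.count_append]
    exact ⟨_, rfl⟩
  rw [hπ, hcount.neg_one_pow]
  simp

/-- The reflection representation on `W × ℤˣ` used to prove the strong exchange property. -/
noncomputable def theta : W →* Equiv.Perm (W × ℤˣ) := cs.lift ⟨eta cs, eta_liftable cs⟩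

lemma theta_simple (i : B) : theta cs (cs.simple i) = eta cs i :=
  cs.lift_apply_simple (eta_liftable cs) i

lemma theta_wordProd (l : List B) :
    theta cs (cs.wordProd l) = (l.map (eta cs)).prod := by
  unfold CoxeterSystem.wordProd
  rw [map_list_prod, List.map_map]
  congr 1
  apply List.map_congr_left
  intro b _
  exact theta_simple cs b

/-- The sign cocycle. -/
noncomputable def nsign (w t : W) : ℤˣ := (theta cs w (t, 1)).2

lemma nsign_eq_count (l : List B) (t : W) :
    nsign cs (cs.wordProd l) t = (-1) ^ ((cs.rightInvSeq l).count t) := by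
  unfold nsign
  rw [theta_wordProd, prod_map_eta, mul_one]

lemma theta_apply (w t : W) (ε : ℤˣ) :
    theta cs w (t, ε) = (w * t * w⁻¹, nsign cs w t * ε) := by
  obtain ⟨l, _, rfl⟩ := cs.exists_reduced_word' w
  rw [theta_wordProd, prod_map_eta, nsign_eq_count]

lemma nsign_mul (u v t : W) :
    nsign cs (u * v) t = nsign cs u (v * t * v⁻¹) * nsign cs v t := by
  unfold nsign
  rw [map_mul, Equiv.Perm.mul_apply, theta_apply, theta_apply, theta_apply]
  simp

lemma nsign_simple_self (i : B) : nsign cs (cs.simple i) (cs.simple i) = -1 := by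
  unfold nsign
  rw [theta_simple, eta_apply]
  simp

lemma nsign_inv (v t : W) : nsign cs v⁻¹ t = nsign cs v (v⁻¹ * t * v) := by
  have h := nsign_mul cs v v⁻¹ t
  rw [mul_inv_cancel] at h
  have h1 : nsign cs (1 : W) t = 1 := by
    unfold nsign; rw [map_one]; rfl
  rw [h1] at h
  have h2 : v⁻¹ * t * v⁻¹⁻¹ = v⁻¹ * t * v := by rw [inv_inv]
  rw [h2] at h
  rcases Int.units_eq_one_or (nsign cs v (v⁻¹ * t * v)) with h3 | h3 <;>
    rcases Int.units_eq_one_or (nsign cs v⁻¹ t) with h4 | h4 <;>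
    rw [h3, h4] <;> rw [h3, h4] at h <;> simp_all

lemma nsign_refl_self {t : W} (ht : cs.IsReflection t) : nsign cs t t = -1 := by
  obtain ⟨v, i, rfl⟩ := ht
  set t := v * cs.simple i * v⁻¹ with hts
  have hfactor : t = v * (cs.simple i * v⁻¹) := by rw [hts, mul_assoc]
  have step1 : nsign cs t t = nsign cs v ((cs.simple i * v⁻¹) * t * (cs.simple i * v⁻¹)⁻¹)
      * nsign cs (cs.simple i * v⁻¹) t := by
    rw [hfactor, nsign_mul]
  have harg : (cs.simple i * v⁻¹) * t * (cs.simple i * v⁻¹)⁻¹ = v⁻¹ * t * v := by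
    rw [hts]; group
  have step2 : nsign cs (cs.simple i * v⁻¹) t
      = nsign cs (cs.simple i) (v⁻¹ * t * v) * nsign cs v⁻¹ t := by
    rw [nsign_mul]
    congr 2
    rw [inv_inv]
  have harg2 : v⁻¹ * t * v = cs.simple i := by rw [hts]; group
  rw [step1, harg, step2, harg2, nsign_simple_self, nsign_inv, harg2]
  rcases Int.units_eq_one_or (nsign cs v (cs.simple i)) with h3 | h3 <;> rw [h3] <;> decide

lemma mem_ris_of_nsign_neg {w t : W} (h : nsign cs w t = -1) {l : List B}
    (hl : cs.wordProd l = w) : t ∈ cs.rightInvSeq l := by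
  rw [← hl] at h
  rw [nsign_eq_count] at h
  by_contra hmem
  have : (cs.rightInvSeq l).count t = 0 := by
    exact List.count_eq_zero.mpr hmem
  rw [this, pow_zero] at h
  exact absurd h (by decide)

lemma length_mul_lt_of_nsign_neg {w t : W} (h : nsign cs w t = -1) :
    cs.length (w * t) < cs.length w := by
  obtain ⟨l, hred, rfl⟩ := cs.exists_reduced_word' w
  have hmem : t ∈ cs.rightInvSeq l := mem_ris_of_nsign_neg cs h rfl
  exact (cs.isRightInversion_of_mem_rightInvSeq hred hmem).2

lemma nsign_neg_of_length_mul_lt {w t : W} (ht : cs.IsReflection t)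
    (h : cs.length (w * t) < cs.length w) : nsign cs w t = -1 := by
  have hw : w = (w * t) * t := by
    rw [mul_assoc, ht.mul_self, mul_one]
  have hc : nsign cs w t = nsign cs (w * t) (t * t * t⁻¹) * nsign cs t t := by
    conv_lhs => rw [hw]
    rw [nsign_mul]
  have harg : t * t * t⁻¹ = t := by rw [ht.mul_self, one_mul, ht.inv]
  rw [harg, nsign_refl_self cs ht] at hc
  rcases Int.units_eq_one_or (nsign cs (w * t) t) with h3 | h3
  · rw [hc, h3]; decide
  · exfalso
    have := length_mul_lt_of_nsign_neg cs h3
    rw [mul_assoc, ht.mul_self, mul_one] at this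
    omega

/-- The strong exchange property. -/
lemma strong_exchange (l : List B) {t : W} (ht : cs.IsReflection t)
    (h : cs.length (cs.wordProd l * t) < cs.length (cs.wordProd l)) :
    ∃ j < l.length, cs.wordProd (l.eraseIdx j) = cs.wordProd l * t := by
  have hmem : t ∈ cs.rightInvSeq l :=
    mem_ris_of_nsign_neg cs (nsign_neg_of_length_mul_lt cs ht h) rfl
  obtain ⟨j, hj, hget⟩ := List.mem_iff_getElem.mp hmem
  rw [cs.length_rightInvSeq] at hj
  refine ⟨j, hj, ?_⟩
  rw [← cs.wordProd_mul_getD_rightInvSeq l j]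
  congr 1
  rw [List.getD_eq_getElem _ 1 (by rw [cs.length_rightInvSeq]; exact hj), hget]

end Salvetti

namespace Salvetti
open CoxeterSystem List
open scoped Classical

variable {B W : Type*} [Group W] {M : CoxeterMatrix B} (cs : CoxeterSystem M W)

lemma deletion : ∀ (n : ℕ) (l : List B), l.length = n →
    ∃ l', cs.wordProd l' = cs.wordProd l ∧ cs.IsReduced l' ∧ ∀ b ∈ l', b ∈ l := by
  intro n
  induction n using Nat.strong_induction_on with
  | _ n ih =>
    intro l hlen
    by_cases hred : cs.IsReduced l
    · exact ⟨l, rfl, hred, fun b hb => hb⟩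
    · have hne : l ≠ [] := by
        rintro rfl
        exact hred (by simp [CoxeterSystem.IsReduced])
      have hlpos : 0 < l.length := List.length_pos_iff.mpr hne
      have hP : ∃ j, ¬ cs.IsReduced (l.take (j+1)) := by
        refine ⟨l.length - 1, ?_⟩
        rwa [show l.length - 1 + 1 = l.length by omega, List.take_length]
      set j₀ := Nat.find hP with hj₀
      have hPj₀ : ¬ cs.IsReduced (l.take (j₀+1)) := Nat.find_spec hP
      have htake_red : cs.IsReduced (l.take j₀) := by
        rcases Nat.eq_zero_or_pos j₀ with h0 | hpos
        · rw [h0, List.take_zero]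
          simp [CoxeterSystem.IsReduced]
        · have := Nat.find_min hP (m := j₀ - 1) (by omega)
          push_neg at this
          rwa [show j₀ - 1 + 1 = j₀ by omega] at this
      have hj₀lt : j₀ < l.length := by
        by_contra hge
        push_neg at hge
        have h1 : l.take (j₀ + 1) = l := List.take_of_length_le (by omega)
        have h2 : l.take j₀ = l := List.take_of_length_le (by omega)
        rw [h1] at hPj₀
        rw [h2] at htake_red
        exact hPj₀ htake_red
      set i := l[j₀]
      have htakesucc : l.take (j₀ + 1) = l.take j₀ ++ [i] := by
        rw [List.take_succ]
        congr 1
        simp [List.getElem?_eq_getElem hj₀lt]; rfl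
      have hlen_take : (l.take j₀).length = j₀ := by
        rw [List.length_take]; omega
      have hlt : cs.length (cs.wordProd (l.take j₀) * cs.simple i)
          < cs.length (cs.wordProd (l.take j₀)) := by
        have hlred : cs.length (cs.wordProd (l.take j₀)) = j₀ := by
          rw [htake_red]; exact hlen_take
        have hub : cs.length (cs.wordProd (l.take (j₀+1))) ≤ j₀ := by
          have := cs.length_wordProd_le (l.take (j₀+1))
          have hlt2 : cs.length (cs.wordProd (l.take (j₀+1))) ≠ (l.take (j₀+1)).length :=
            hPj₀
          have hlen2 : (l.take (j₀+1)).length = j₀ + 1 := by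
            rw [List.length_take]; omega
          omega
        rw [htakesucc, cs.wordProd_append, cs.wordProd_singleton] at hub
        have hne2 := cs.length_mul_simple_ne (cs.wordProd (l.take j₀)) i
        omega
      obtain ⟨k, hk, hkeq⟩ := strong_exchange cs (l.take j₀) (cs.isReflection_simple i) hlt
      set l'' := (l.take j₀).eraseIdx k ++ l.drop (j₀ + 1) with hl''
      have hπ : cs.wordProd l'' = cs.wordProd l := by
        rw [hl'', cs.wordProd_append, hkeq]
        conv_rhs => rw [← List.take_append_drop (j₀+1) l]
        rw [cs.wordProd_append, htakesucc, cs.wordProd_append, cs.wordProd_singleton]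
      have hlen'' : l''.length < n := by
        rw [hl'', List.length_append, List.length_drop]
        have := List.length_eraseIdx_add_one (l := l.take j₀) (i := k) (by omega)
        omega
      obtain ⟨l', h1, h2, h3⟩ := ih l''.length hlen'' l'' rfl
      refine ⟨l', by rw [h1, hπ], h2, ?_⟩
      intro b hb
      have hb'' := h3 b hb
      rw [hl''] at hb''
      rcases List.mem_append.mp hb'' with h | h
      · exact List.take_subset j₀ l (List.mem_of_mem_eraseIdx h)
      · exact List.drop_subset _ l h

lemma wordProd_mem_closure {T : Set B} {l : List B} (h : ∀ b ∈ l, b ∈ T) :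
    cs.wordProd l ∈ Subgroup.closure (cs.simple '' T) := by
  induction l with
  | nil =>
    rw [cs.wordProd_nil]
    exact one_mem _
  | cons i l ihl =>
    rw [cs.wordProd_cons]
    exact mul_mem (Subgroup.subset_closure ⟨i, h i (by simp), rfl⟩)
      (ihl (fun b hb => h b (by simp [hb])))

lemma exists_word_of_mem_closure {T : Set B} {w : W}
    (h : w ∈ Subgroup.closure (cs.simple '' T)) :
    ∃ l, (∀ b ∈ l, b ∈ T) ∧ cs.wordProd l = w := by
  induction h using Subgroup.closure_induction with
  | mem x hx =>
    obtain ⟨b, hb, rfl⟩ := hx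
    exact ⟨[b], by simpa using hb, cs.wordProd_singleton b⟩
  | one => exact ⟨[], by simp, cs.wordProd_nil⟩
  | mul x y _ _ ihx ihy =>
    obtain ⟨lx, hx1, rfl⟩ := ihx
    obtain ⟨ly, hy1, rfl⟩ := ihy
    exact ⟨lx ++ ly, fun b hb => (List.mem_append.mp hb).elim (hx1 b) (hy1 b),
      cs.wordProd_append lx ly⟩
  | inv x _ ihx =>
    obtain ⟨lx, hx1, rfl⟩ := ihx
    exact ⟨lx.reverse, fun b hb => hx1 b (List.mem_reverse.mp hb), cs.wordProd_reverse lx⟩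

lemma exists_reduced_word_subset {T : Set B} {w : W}
    (h : w ∈ Subgroup.closure (cs.simple '' T)) :
    ∃ l, cs.IsReduced l ∧ (∀ b ∈ l, b ∈ T) ∧ cs.wordProd l = w := by
  obtain ⟨l, hl, rfl⟩ := exists_word_of_mem_closure cs h
  obtain ⟨l', h1, h2, h3⟩ := deletion cs l.length l rfl
  exact ⟨l', h2, fun b hb => hl b (h3 b hb), h1⟩

end Salvetti

namespace Salvetti
open CoxeterSystem List
open scoped Classical

variable {B W : Type*} [Group W] {M : CoxeterMatrix B} (cs : CoxeterSystem M W)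

/-- Key lemma: if `w` is of minimal length in its coset `w · W_T`, then lengths add. -/
lemma length_min_add {T : Set B} {w : W}
    (hw : ∀ u ∈ Subgroup.closure (cs.simple '' T), cs.length w ≤ cs.length (w * u)) :
    ∀ v ∈ Subgroup.closure (cs.simple '' T), cs.length (w * v) = cs.length w + cs.length v := by
  suffices h : ∀ (n : ℕ) (v : W), v ∈ Subgroup.closure (cs.simple '' T) → cs.length v = n →
      cs.length (w * v) = cs.length w + cs.length v by
    intro v hv
    exact h (cs.length v) v hv rfl
  intro n
  induction n using Nat.strong_induction_on with
  | _ n ih =>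
    intro v hv hn
    obtain ⟨τ, hτred, hτT, hτprod⟩ := exists_reduced_word_subset cs hv
    rcases List.eq_nil_or_concat τ with rfl | ⟨τ', i, rfl⟩
    · rw [← hτprod, cs.wordProd_nil, mul_one, cs.length_one, add_zero]
    · -- v = v' * s i
      have hτ'len : τ'.length + 1 = cs.length v := by
        rw [← hτprod, hτred]
        simp
      set v' := cs.wordProd τ' with hv'
      have hvv : v = v' * cs.simple i := by
        rw [← hτprod, hv', ← cs.wordProd_concat]
      have hτ'red : cs.IsReduced τ' := by
        have := hτred.take τ'.length
        rwa [List.concat_eq_append, List.take_left] at this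
      have hv'len : cs.length v' = τ'.length := hτ'red
      have hv'mem : v' ∈ Subgroup.closure (cs.simple '' T) :=
        wordProd_mem_closure cs (fun b hb => hτT b (by simp [List.concat_eq_append, hb]))
      have hiT : i ∈ T := hτT i (by simp [List.concat_eq_append])
      have hsi : cs.simple i ∈ Subgroup.closure (cs.simple '' T) :=
        Subgroup.subset_closure ⟨i, hiT, rfl⟩
      have hIH : cs.length (w * v') = cs.length w + cs.length v' := by
        apply ih (cs.length v') (by omega) v' hv'mem rfl
      -- claim : length (w * v' * s i) = length (w * v') + 1
      have hclaim : cs.length (w * v' * cs.simple i) = cs.length (w * v') + 1 := by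
        by_contra hcl
        have hne := cs.length_mul_simple_ne (w * v') i
        have hcases := cs.length_mul_simple (w * v') i
        have hlt : cs.length ((w * v') * cs.simple i) < cs.length (w * v') := by
          rcases hcases with h | h
          · exact absurd h hcl
          · omega
        obtain ⟨ωw, hωred, hωprod⟩ := cs.exists_reduced_word' w
        have hwlen : cs.length w = ωw.length := by rw [hωprod]; exact hωred
        have happred : cs.IsReduced (ωw ++ τ') := by
          unfold CoxeterSystem.IsReduced
          rw [cs.wordProd_append, ← hωprod, ← hv', hIH, List.length_append]
          omega
        have happrod : cs.wordProd (ωw ++ τ') = w * v' := by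
          rw [cs.wordProd_append, ← hωprod, ← hv']
        obtain ⟨j, hj, hjeq⟩ := strong_exchange cs (ωw ++ τ')
          (cs.isReflection_simple i) (by rw [happrod]; exact hlt)
        rw [happrod] at hjeq
        rcases lt_or_ge j ωw.length with hjlt | hjge
        · -- j in the w part
          have herase : (ωw ++ τ').eraseIdx j = ωw.eraseIdx j ++ τ' :=
            List.eraseIdx_append_of_lt_length hjlt τ'
          set r := v' * cs.simple i * v'⁻¹ with hr
          have hrmem : r ∈ Subgroup.closure (cs.simple '' T) :=
            mul_mem (mul_mem hv'mem hsi) (inv_mem hv'mem)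
          have hwr : w * r = cs.wordProd (ωw.eraseIdx j) := by
            rw [hr, ← mul_assoc, ← mul_assoc, ← hjeq, herase, cs.wordProd_append]
            rw [mul_assoc, mul_inv_cancel, mul_one]
          have hshort : cs.length (w * r) < cs.length w := by
            rw [hwr]
            calc cs.length (cs.wordProd (ωw.eraseIdx j)) ≤ (ωw.eraseIdx j).length :=
                  cs.length_wordProd_le _
              _ < ωw.length := by
                  have := List.length_eraseIdx_add_one (l := ωw) (i := j) hjlt
                  omega
              _ = cs.length w := hwlen.symm
          exact absurd (hw r hrmem) (by omega)
        · -- j in the v' part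
          have herase : (ωw ++ τ').eraseIdx j = ωw ++ τ'.eraseIdx (j - ωw.length) :=
            List.eraseIdx_append_of_length_le hjge τ'
          have hveq : v' * cs.simple i = cs.wordProd (τ'.eraseIdx (j - ωw.length)) := by
            have : w * (v' * cs.simple i) = w * cs.wordProd (τ'.eraseIdx (j - ωw.length)) := by
              rw [← mul_assoc, ← hjeq, herase, cs.wordProd_append, ← hωprod]
            exact mul_left_cancel this
          have hjv : j - ωw.length < τ'.length := by
            rw [List.length_append] at hj
            omega
          have hshort2 : cs.length (v' * cs.simple i) ≤ τ'.length - 1 := by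
            rw [hveq]
            calc cs.length (cs.wordProd (τ'.eraseIdx (j - ωw.length)))
                ≤ (τ'.eraseIdx (j - ωw.length)).length := cs.length_wordProd_le _
              _ ≤ τ'.length - 1 := by
                  have := List.length_eraseIdx_add_one (l := τ') (i := j - ωw.length) hjv
                  omega
          have hfin : cs.length v ≤ τ'.length - 1 := by rw [hvv]; exact hshort2
          omega
      have hlv : cs.length (v' * cs.simple i) = τ'.length + 1 := by
        rw [← hvv]; omega
      rw [hvv, ← mul_assoc, hclaim, hIH]
      omega

end Salvetti

namespace Salvetti
open CoxeterSystem List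
open scoped Classical

variable {B W : Type*} [Group W] {M : CoxeterMatrix B} (cs : CoxeterSystem M W)

/-- Minimal length coset representatives for `W_Y` inside `W_X`. -/
def mins (X Y : Set B) : Set W :=
  {w | w ∈ Subgroup.closure (cs.simple '' X) ∧
    ∀ v ∈ Subgroup.closure (cs.simple '' Y), cs.length w ≤ cs.length (w * v)}

lemma closure_mono' {X Y : Set B} (h : Y ⊆ X) :
    Subgroup.closure (cs.simple '' Y) ≤ Subgroup.closure (cs.simple '' X) :=
  Subgroup.closure_mono (Set.image_mono h)

lemma mins_length_add {X Y : Set B} {w v : W} (hw : w ∈ mins cs X Y)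
    (hv : v ∈ Subgroup.closure (cs.simple '' Y)) :
    cs.length (w * v) = cs.length w + cs.length v :=
  length_min_add cs hw.2 v hv

lemma mins_mul {X X' Y : Set B} (hYX' : Y ⊆ X') {w v : W}
    (hw : w ∈ mins cs X X') (hv : v ∈ mins cs X' Y)
    (hX'X : Subgroup.closure (cs.simple '' X') ≤ Subgroup.closure (cs.simple '' X)) :
    w * v ∈ mins cs X Y := by
  constructor
  · exact mul_mem hw.1 (hX'X hv.1)
  · intro u hu
    have huX' : u ∈ Subgroup.closure (cs.simple '' X') := closure_mono' cs hYX' hu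
    have h1 : cs.length (w * v * u) = cs.length w + cs.length (v * u) := by
      rw [mul_assoc]
      exact mins_length_add cs hw (mul_mem hv.1 huX')
    have h2 : cs.length (w * v) = cs.length w + cs.length v := mins_length_add cs hw hv.1
    have h3 : cs.length v ≤ cs.length (v * u) := hv.2 u hu
    omega

lemma mins_mul_length {X X' Y : Set B} {w v : W}
    (hw : w ∈ mins cs X X') (hv : v ∈ mins cs X' Y) :
    cs.length (w * v) = cs.length w + cs.length v :=
  mins_length_add cs hw hv.1

lemma mins_inj {X X' Y : Set B} {w v w' v' : W}
    (hw : w ∈ mins cs X X') (hv : v ∈ mins cs X' Y)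
    (hw' : w' ∈ mins cs X X') (hv' : v' ∈ mins cs X' Y)
    (heq : w * v = w' * v') : w = w' ∧ v = v' := by
  have hu : w⁻¹ * w' = v * v'⁻¹ := by
    have : w * (v * v'⁻¹) = w' := by
      rw [← mul_assoc, heq, mul_assoc, mul_inv_cancel, mul_one]
    rw [← this, ← mul_assoc, inv_mul_cancel, one_mul]
  have humem : w⁻¹ * w' ∈ Subgroup.closure (cs.simple '' X') := by
    rw [hu]
    exact mul_mem hv.1 (inv_mem hv'.1)
  have h1 : cs.length w' = cs.length w + cs.length (w⁻¹ * w') := by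
    have := mins_length_add cs hw humem
    rwa [← mul_assoc, mul_inv_cancel, one_mul] at this
  have humem' : w'⁻¹ * w ∈ Subgroup.closure (cs.simple '' X') := by
    have : w'⁻¹ * w = (w⁻¹ * w')⁻¹ := by group
    rw [this]
    exact inv_mem humem
  have h2 : cs.length w = cs.length w' + cs.length (w'⁻¹ * w) := by
    have := mins_length_add cs hw' humem'
    rwa [← mul_assoc, mul_inv_cancel, one_mul] at this
  have h3 : cs.length (w⁻¹ * w') = 0 := by omega
  have h4 : w⁻¹ * w' = 1 := cs.length_eq_zero_iff.mp h3
  have h5 : w = w' := by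
    have := congrArg (w * ·) h4
    simp only [← mul_assoc, mul_inv_cancel, one_mul, mul_one] at this
    exact this.symm
  refine ⟨h5, ?_⟩
  rw [h5] at heq
  exact mul_left_cancel heq

lemma mins_decomp {X X' Y : Set B} (hYX' : Y ⊆ X')
    (hX'X : Subgroup.closure (cs.simple '' X') ≤ Subgroup.closure (cs.simple '' X))
    {u : W} (hu : u ∈ mins cs X Y) :
    ∃ w ∈ mins cs X X', ∃ v ∈ mins cs X' Y, u = w * v := by
  have hex : ∃ n, ∃ v ∈ Subgroup.closure (cs.simple '' X'), cs.length (u * v) = n :=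
    ⟨cs.length u, 1, one_mem _, by rw [mul_one]⟩
  classical
  set n₀ := Nat.find hex with hn₀
  obtain ⟨v₀, hv₀mem, hv₀len⟩ := Nat.find_spec hex
  set w := u * v₀ with hwdef
  have hwmin : ∀ x ∈ Subgroup.closure (cs.simple '' X'), cs.length w ≤ cs.length (w * x) := by
    intro x hx
    have : cs.length (w * x) = cs.length (u * (v₀ * x)) := by rw [hwdef, mul_assoc]
    rw [this, hv₀len]
    exact Nat.find_min' hex ⟨v₀ * x, mul_mem hv₀mem hx, rfl⟩
  have hwmem : w ∈ Subgroup.closure (cs.simple '' X) :=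
    mul_mem hu.1 (hX'X hv₀mem)
  set v := v₀⁻¹ with hvdef
  have hvmem : v ∈ Subgroup.closure (cs.simple '' X') := inv_mem hv₀mem
  have huwv : u = w * v := by rw [hwdef, hvdef, mul_assoc, mul_inv_cancel, mul_one]
  refine ⟨w, ⟨hwmem, hwmin⟩, v, ⟨hvmem, ?_⟩, huwv⟩
  intro x hx
  have hxX' : x ∈ Subgroup.closure (cs.simple '' X') := closure_mono' cs hYX' hx
  have h1 : cs.length (w * (v * x)) = cs.length w + cs.length (v * x) :=
    length_min_add cs hwmin (v * x) (mul_mem hvmem hxX')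
  have h2 : cs.length (w * v) = cs.length w + cs.length v :=
    length_min_add cs hwmin v hvmem
  have h3 : cs.length (u * x) ≥ cs.length u := hu.2 x hx
  rw [huwv] at h3
  rw [mul_assoc] at h3
  omega

end Salvetti


namespace Salvetti
open CoxeterSystem List
open scoped Classical

variable {B W : Type*} [Group W] {M : CoxeterMatrix B} (cs : CoxeterSystem M W)

section Assembly

variable {Mod : Type*} [AddCommGroup Mod]

lemma psi_mul {ψ : W → ArtinGroup M} (hψ : IsMatsumotoSection cs ψ) {w v : W}
    (h : cs.length (w * v) = cs.length w + cs.length v) : ψ (w * v) = ψ w * ψ v := by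
  obtain ⟨lw, hwred, hwprod⟩ := cs.exists_reduced_word' w
  obtain ⟨lv, hvred, hvprod⟩ := cs.exists_reduced_word' v
  have hwlen : cs.length w = lw.length := by rw [hwprod]; exact hwred
  have hvlen : cs.length v = lv.length := by rw [hvprod]; exact hvred
  have happ : cs.wordProd (lw ++ lv) = w * v := by
    rw [cs.wordProd_append, ← hwprod, ← hvprod]
  have hred : cs.IsReduced (lw ++ lv) := by
    unfold CoxeterSystem.IsReduced
    rw [happ, h, List.length_append]
    omega
  have h1 := hψ (w * v) (lw ++ lv) hred happ
  have h2 := hψ w lw hwred hwprod.symm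
  have h3 := hψ v lv hvred hvprod.symm
  rw [h1, h2, h3, List.map_append, List.prod_append]

lemma double_sum_eq {ψ : W → ArtinGroup M} (hψ : IsMatsumotoSection cs ψ)
    (lam : ArtinGroup M →* Multiplicative (AddAut Mod))
    {X X' Y : Set B} (hYX' : Y ⊆ X') (hX'X : X' ⊆ X)
    (hfin : (↑(Subgroup.closure (cs.simple '' X)) : Set W).Finite) (x : Mod) :
    (∑ᶠ w ∈ mins cs X X', (-1:ℤ) ^ cs.length w •
      (Multiplicative.toAdd (lam (ψ w))) (∑ᶠ v ∈ mins cs X' Y, (-1:ℤ) ^ cs.length v • (Multiplicative.toAdd (lam (ψ v))) x))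
    = ∑ᶠ u ∈ mins cs X Y, (-1:ℤ) ^ cs.length u • (Multiplicative.toAdd (lam (ψ u))) x := by
  have hle : Subgroup.closure (cs.simple '' X') ≤ Subgroup.closure (cs.simple '' X) :=
    closure_mono' cs hX'X
  have hA : (mins cs X X').Finite := hfin.subset (fun w hw => hw.1)
  have hB : (mins cs X' Y).Finite := hfin.subset (fun v hv => hle hv.1)
  have hC : (mins cs X Y).Finite := hfin.subset (fun u hu => hu.1)
  rw [finsum_mem_eq_finite_toFinset_sum _ hA, finsum_mem_eq_finite_toFinset_sum _ hB,
    finsum_mem_eq_finite_toFinset_sum _ hC]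
  have hpush : ∀ w : W,
      (-1:ℤ) ^ cs.length w • (Multiplicative.toAdd (lam (ψ w))) (∑ v ∈ hB.toFinset,
          (-1:ℤ) ^ cs.length v • (Multiplicative.toAdd (lam (ψ v))) x)
      = ∑ v ∈ hB.toFinset, (-1:ℤ) ^ cs.length w •
          ((-1:ℤ) ^ cs.length v • (Multiplicative.toAdd (lam (ψ w) * lam (ψ v))) x) := by
    intro w
    rw [map_sum, Finset.smul_sum]
    refine Finset.sum_congr rfl (fun v _ => ?_)
    rw [map_zsmul, toAdd_mul, AddAut.add_apply]
  simp_rw [hpush]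
  rw [← Finset.sum_product']
  refine Finset.sum_nbij (fun p => p.1 * p.2) ?_ ?_ ?_ ?_
  · rintro ⟨w, v⟩ hp
    rw [Finset.mem_product, Set.Finite.mem_toFinset, Set.Finite.mem_toFinset] at hp
    rw [Set.Finite.mem_toFinset]
    exact mins_mul cs hYX' hp.1 hp.2 hle
  · rintro ⟨w, v⟩ hp ⟨w', v'⟩ hp' heq
    simp only [Finset.coe_product, Set.mem_prod, Set.Finite.coe_toFinset] at hp hp'
    obtain ⟨h1, h2⟩ := mins_inj cs hp.1 hp.2 hp'.1 hp'.2 heq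
    simp [h1, h2]
  · intro u hu
    rw [Set.Finite.coe_toFinset] at hu
    obtain ⟨w, hw, v, hv, rfl⟩ := mins_decomp cs hYX' hle hu
    refine ⟨(w, v), ?_, rfl⟩
    rw [Finset.coe_product]
    exact Set.mem_prod.mpr ⟨by rw [Set.Finite.coe_toFinset]; exact hw,
      by rw [Set.Finite.coe_toFinset]; exact hv⟩
  · rintro ⟨w, v⟩ hp
    rw [Finset.mem_product, Set.Finite.mem_toFinset, Set.Finite.mem_toFinset] at hp
    have hlen : cs.length (w * v) = cs.length w + cs.length v :=
      mins_mul_length cs hp.1 hp.2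
    rw [smul_smul, ← pow_add, ← hlen, ← map_mul, ← psi_mul cs hψ hlen]

lemma sum_pairs_zero {α : Type*} [DecidableEq α] (V : Finset α) (Q : α → α → Mod)
    (h : ∀ s ∈ V, ∀ t ∈ V, s ≠ t → Q s t + Q t s = 0) :
    ∑ s ∈ V, ∑ t ∈ V.erase s, Q s t = 0 := by
  have hstep : ∀ s ∈ V, ∑ t ∈ V.erase s, Q s t
      = ∑ t ∈ V, if t ≠ s then Q s t else 0 := by
    intro s _
    rw [← Finset.sum_filter, Finset.filter_ne']
  rw [Finset.sum_congr rfl hstep, ← Finset.sum_product']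
  refine Finset.sum_involution (fun p _ => (p.2, p.1)) ?_ ?_ ?_ ?_
  · rintro ⟨s, t⟩ hp
    by_cases hst : t = s
    · simp [hst]
    · rw [if_pos hst, if_pos (show ¬_ from fun hc => hst (Eq.symm hc))]
      rw [Finset.mem_product] at hp
      exact h s hp.1 t hp.2 (fun hc => hst (by rw [hc]))
  · rintro ⟨s, t⟩ hp hne
    rcases eq_or_ne t s with hst | hst
    · exact absurd (if_neg (by simp [hst])) hne
    · exact fun hc => hst (congrArg Prod.fst hc)
  · rintro ⟨s, t⟩ hp
    rw [Finset.mem_product] at hp ⊢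
    exact ⟨hp.2, hp.1⟩
  · rintro ⟨s, t⟩ _
    rfl

end Assembly

end Salvetti

namespace Salvetti
open CoxeterSystem List
open scoped Classical

variable {B W : Type*} [Group W] {M : CoxeterMatrix B} (cs : CoxeterSystem M W)

lemma neg_one_pow_succ (n : ℕ) : (-1:ℤ) ^ (n+1) = -(-1:ℤ) ^ n := by
  rw [pow_succ, mul_neg_one]

lemma card_filter_erase {α : Type*} [DecidableEq α] (A : Finset α) (p : α → Prop)
    [DecidablePred p] {t : α} (ht : t ∈ A) :
    (A.filter p).card = ((A.erase t).filter p).card + if p t then 1 else 0 := by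
  conv_lhs => rw [← Finset.insert_erase ht]
  rw [Finset.filter_insert]
  by_cases hp : p t
  · rw [if_pos hp, if_pos hp, Finset.card_insert_of_notMem]
    intro hc
    exact (Finset.notMem_erase t A) (Finset.mem_of_mem_filter t hc)
  · rw [if_neg hp, if_neg hp, add_zero]

lemma sign_antisym [LinearOrder B] {V : Finset B} {s t : B} (hs : s ∈ V) (ht : t ∈ V)
    (hst : s ≠ t) :
    (-1:ℤ) ^ (((V.erase s).filter (fun y => y < s)).card + 1)
      * (-1:ℤ) ^ ((((V.erase s).erase t).filter (fun y => y < t)).card + 1)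
    = -((-1:ℤ) ^ (((V.erase t).filter (fun y => y < t)).card + 1)
      * (-1:ℤ) ^ ((((V.erase t).erase s).filter (fun y => y < s)).card + 1)) := by
  have hts : t ∈ V.erase s := Finset.mem_erase.mpr ⟨fun h => hst (h.symm), ht⟩
  have hst' : s ∈ V.erase t := Finset.mem_erase.mpr ⟨hst, hs⟩
  have hTT : (V.erase t).erase s = (V.erase s).erase t := Finset.erase_right_comm
  set T := (V.erase s).erase t with hT
  set a := (T.filter (fun y => y < s)).card with ha
  set b := (T.filter (fun y => y < t)).card with hb
  have e1 : ((V.erase s).filter (fun y => y < s)).card = a + if t < s then 1 else 0 :=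
    card_filter_erase (V.erase s) (fun y => y < s) hts
  have e2 : ((V.erase t).filter (fun y => y < t)).card = b + if s < t then 1 else 0 := by
    rw [card_filter_erase (V.erase t) (fun y => y < t) hst', hTT]
  have e3 : (((V.erase t).erase s).filter (fun y => y < s)).card = a := by rw [hTT]
  rw [e1, e2, e3, ← pow_add, ← pow_add]
  rcases hst.lt_or_gt with hlt | hlt
  · rw [if_neg (not_lt_of_gt hlt), if_pos hlt]
    rw [show b + 1 + 1 + (a + 1) = (a + 0 + 1 + (b + 1)) + 1 by ring, neg_one_pow_succ, neg_neg]
  · rw [if_pos hlt, if_neg (not_lt_of_gt hlt)]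
    rw [show a + 1 + 1 + (b + 1) = (b + 0 + 1 + (a + 1)) + 1 by ring, neg_one_pow_succ]

section MainDefs

variable [LinearOrder B] {Mod : Type*} [AddCommGroup Mod]

/-- The symmetric inner sum for the pair `(s,t)`. -/
noncomputable def SfunD (ψ : W → ArtinGroup M) (lam : ArtinGroup M →* Multiplicative (AddAut Mod))
    (c : SalC cs Mod) (U : SalIndex cs) (s t : B) : Mod :=
  ∑ᶠ u ∈ mins cs ↑U.1 ↑((U.1.erase s).erase t), (-1:ℤ) ^ (cs.length u) •
    (Multiplicative.toAdd (lam (ψ u))) (c ⟨(U.1.erase s).erase t,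
      salIndex_erase cs ⟨U.1.erase s, salIndex_erase cs U s⟩ t⟩)

lemma SfunD_symm (ψ : W → ArtinGroup M) (lam : ArtinGroup M →* Multiplicative (AddAut Mod))
    (c : SalC cs Mod) (U : SalIndex cs) (s t : B) :
    SfunD cs ψ lam c U s t = SfunD cs ψ lam c U t s := by
  have hTT : (U.1.erase s).erase t = (U.1.erase t).erase s := Finset.erase_right_comm
  have hidx : (⟨(U.1.erase s).erase t,
        salIndex_erase cs ⟨U.1.erase s, salIndex_erase cs U s⟩ t⟩ : SalIndex cs)
      = ⟨(U.1.erase t).erase s, salIndex_erase cs ⟨U.1.erase t, salIndex_erase cs U t⟩ s⟩ :=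
    Subtype.ext hTT
  unfold SfunD
  rw [hidx, hTT]

end MainDefs

end Salvetti

open Salvetti CoxeterSystem in
theorem salvetti_is_cochain_complex
    {B W : Type*} [LinearOrder B] [Finite B] [Group W] {M : CoxeterMatrix B}
    (cs : CoxeterSystem M W) (ψ : W → ArtinGroup M)
    (hψ : IsMatsumotoSection cs ψ)
    {Mod : Type*} [AddCommGroup Mod] (lam : ArtinGroup M →* Multiplicative (AddAut Mod))
    (c : SalC cs Mod) :
    salD cs ψ lam (salD cs ψ lam c) = 0 := by
  classical
  funext U
  show (salD cs ψ lam (salD cs ψ lam c)) U = 0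
  simp only [salD]
  -- abbreviations
  set V := U.1 with hV
  have key : ∀ s ∈ V,
      ((-1:ℤ) ^ (((V.erase s).filter (fun y => y < s)).card + 1) •
        ∑ᶠ w ∈ minCosetReps cs (V.erase s) s, (-1:ℤ) ^ (cs.length w) •
          (Multiplicative.toAdd (lam (ψ w))) (∑ t ∈ V.erase s,
            (-1:ℤ) ^ ((((V.erase s).erase t).filter (fun y => y < t)).card + 1) •
              ∑ᶠ v ∈ minCosetReps cs ((V.erase s).erase t) t, (-1:ℤ) ^ (cs.length v) •
                (Multiplicative.toAdd (lam (ψ v))) (c ⟨(V.erase s).erase t,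
                  salIndex_erase cs ⟨V.erase s, salIndex_erase cs U s⟩ t⟩)))
      = ∑ t ∈ V.erase s,
          ((-1:ℤ) ^ (((V.erase s).filter (fun y => y < s)).card + 1) *
            (-1:ℤ) ^ ((((V.erase s).erase t).filter (fun y => y < t)).card + 1)) •
            SfunD cs ψ lam c U s t := by
    intro s hs
    have hins : (insert s (↑(V.erase s)) : Set B) = ↑V := by
      rw [Finset.coe_erase, Set.insert_diff_singleton]
      exact Set.insert_eq_self.mpr (Finset.mem_coe.mpr hs)
    have hminr : minCosetReps cs (V.erase s) s = mins cs ↑V ↑(V.erase s) := by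
      rw [show minCosetReps cs (V.erase s) s
        = mins cs (insert s ↑(V.erase s)) ↑(V.erase s) from rfl, hins]
    have hA : (mins cs ↑V ↑(V.erase s)).Finite := U.2.subset (fun w hw => hw.1)
    rw [hminr, finsum_mem_eq_finite_toFinset_sum _ hA]
    -- push the t-sum out
    have hpush : ∀ w : W, (-1:ℤ) ^ (cs.length w) •
        (Multiplicative.toAdd (lam (ψ w))) (∑ t ∈ V.erase s,
          (-1:ℤ) ^ ((((V.erase s).erase t).filter (fun y => y < t)).card + 1) •
            ∑ᶠ v ∈ minCosetReps cs ((V.erase s).erase t) t, (-1:ℤ) ^ (cs.length v) •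
              (Multiplicative.toAdd (lam (ψ v))) (c ⟨(V.erase s).erase t,
                salIndex_erase cs ⟨V.erase s, salIndex_erase cs U s⟩ t⟩))
        = ∑ t ∈ V.erase s,
            (-1:ℤ) ^ ((((V.erase s).erase t).filter (fun y => y < t)).card + 1) •
            ((-1:ℤ) ^ (cs.length w) •
              (Multiplicative.toAdd (lam (ψ w))) (∑ᶠ v ∈ minCosetReps cs ((V.erase s).erase t) t,
                (-1:ℤ) ^ (cs.length v) • (Multiplicative.toAdd (lam (ψ v))) (c ⟨(V.erase s).erase t,
                  salIndex_erase cs ⟨V.erase s, salIndex_erase cs U s⟩ t⟩))) := by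
      intro w
      rw [map_sum, Finset.smul_sum]
      refine Finset.sum_congr rfl (fun t _ => ?_)
      rw [map_zsmul]
      rw [smul_comm]
    rw [Finset.sum_congr rfl (fun w _ => hpush w), Finset.sum_comm, Finset.smul_sum]
    refine Finset.sum_congr rfl (fun t ht => ?_)
    -- now handle the pair (s,t)
    have htV : t ∈ V := (Finset.mem_erase.mp ht).2
    have hinsT : (insert t (↑((V.erase s).erase t)) : Set B) = ↑(V.erase s) := by
      rw [Finset.coe_erase, Set.insert_diff_singleton]
      exact Set.insert_eq_self.mpr (Finset.mem_coe.mpr ht)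
    have hminr2 : minCosetReps cs ((V.erase s).erase t) t
        = mins cs ↑(V.erase s) ↑((V.erase s).erase t) := by
      rw [show minCosetReps cs ((V.erase s).erase t) t
        = mins cs (insert t ↑((V.erase s).erase t)) ↑((V.erase s).erase t) from rfl, hinsT]
    have hsub1 : (↑((V.erase s).erase t) : Set B) ⊆ ↑(V.erase s) :=
      Finset.coe_subset.mpr (Finset.erase_subset t (V.erase s))
    have hsub2 : (↑(V.erase s) : Set B) ⊆ ↑V :=
      Finset.coe_subset.mpr (Finset.erase_subset s V)
    have hdouble := double_sum_eq cs hψ lam hsub1 hsub2 U.2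
      (c ⟨(V.erase s).erase t, salIndex_erase cs ⟨V.erase s, salIndex_erase cs U s⟩ t⟩)
    -- pull scalars together
    rw [← Finset.smul_sum, smul_smul]
    congr 1
    calc ∑ w ∈ hA.toFinset, (-1:ℤ) ^ (cs.length w) •
            (Multiplicative.toAdd (lam (ψ w))) (∑ᶠ v ∈ minCosetReps cs ((V.erase s).erase t) t,
              (-1:ℤ) ^ (cs.length v) • (Multiplicative.toAdd (lam (ψ v))) (c ⟨(V.erase s).erase t,
                salIndex_erase cs ⟨V.erase s, salIndex_erase cs U s⟩ t⟩))
        = ∑ᶠ w ∈ mins cs ↑V ↑(V.erase s), (-1:ℤ) ^ (cs.length w) •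
            (Multiplicative.toAdd (lam (ψ w))) (∑ᶠ v ∈ mins cs ↑(V.erase s) ↑((V.erase s).erase t),
              (-1:ℤ) ^ (cs.length v) • (Multiplicative.toAdd (lam (ψ v))) (c ⟨(V.erase s).erase t,
                salIndex_erase cs ⟨V.erase s, salIndex_erase cs U s⟩ t⟩)) := by
          rw [finsum_mem_eq_finite_toFinset_sum _ hA, hminr2]
      _ = SfunD cs ψ lam c U s t := hdouble
  rw [Finset.sum_congr rfl key]
  apply sum_pairs_zero
  intro s hs t ht hst
  rw [SfunD_symm cs ψ lam c U s t, sign_antisym hs ht hst, neg_smul, neg_add_cancel]
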